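/- Let ψ be a state with ‖ψ‖ = 1 that is stationary under U (Uψ = ψ), with ⟨ψ₀, ψ⟩ ≠ 0, and suppose ψ maximizes the overlap with the initial state among unit-norm stationary states: for every state φ with ‖φ‖ = 1 and Uφ = φ, |⟨ψ₀, φ⟩| ≤ |⟨ψ₀, ψ⟩|. Then ψ satisfies: (a) for every unmarked vertex a ∉ M, all amplitudes ψ(a,b) over neighbors b of a are equal; (b) for every marked vertex a ∈ M, ∑_{b adjacent to a} ψ(a,b) = 0; and (c) ψ(a,b) = ψ(b,a) for every dart (a,b). -/

import Mathlib

open Finset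

variable {V : Type*} [Fintype V] [DecidableEq V]

/-- The average of the amplitudes of the state `ψ` at vertex `a`:
`avg_ψ(a) = (1/deg a) * ∑_{b ~ a} ψ(a,b)`. -/
noncomputable def avgQ (G : SimpleGraph V) [DecidableRel G.Adj] (ψ : V → V → ℂ) (a : V) : ℂ :=
  (G.degree a : ℂ)⁻¹ * ∑ b ∈ G.neighborFinset a, ψ a b

/-- The oracle query `Q`: flips the sign of amplitudes at marked vertices. -/
def Qop (M : Finset V) (ψ : V → V → ℂ) : V → V → ℂ :=
  fun a b => if a ∈ M then -ψ a b else ψ a b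

/-- The Grover diffusion coin `C`: inversion about the mean at each vertex. -/
noncomputable def Cop (G : SimpleGraph V) [DecidableRel G.Adj] (ψ : V → V → ℂ) : V → V → ℂ :=
  fun a b => 2 * avgQ G ψ a - ψ a b

/-- The flip-flop shift `S`. -/
def Sop (ψ : V → V → ℂ) : V → V → ℂ :=
  fun a b => ψ b a

/-- The quantum walk search operator `U = S ∘ C ∘ Q`. -/
noncomputable def Uop (G : SimpleGraph V) [DecidableRel G.Adj] (M : Finset V)
    (ψ : V → V → ℂ) : V → V → ℂ :=
  Sop (Cop G (Qop M ψ))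

/-- A state is stationary under `U` if `Uψ = ψ` on every dart of `G`. -/
def StationaryU (G : SimpleGraph V) [DecidableRel G.Adj] (M : Finset V)
    (ψ : V → V → ℂ) : Prop :=
  ∀ a b, G.Adj a b → Uop G M ψ a b = ψ a b

/-- The inner product of two states, summing over all darts of `G`. -/
noncomputable def dInner (G : SimpleGraph V) [DecidableRel G.Adj] (φ ψ : V → V → ℂ) : ℂ :=
  ∑ a : V, ∑ b ∈ G.neighborFinset a, (starRingEnd ℂ) (φ a b) * ψ a b

/-- The initial uniform state, assigning `1/√(2|E|)` to every dart. -/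
noncomputable def psi0 (G : SimpleGraph V) [DecidableRel G.Adj] : V → V → ℂ :=
  fun _ _ => (((Real.sqrt (2 * (G.edgeFinset.card : ℝ)))⁻¹ : ℝ) : ℂ)

/-- The norm of a state: `‖ψ‖ = √⟨ψ,ψ⟩`, summing over all darts of `G`. -/
noncomputable def dNorm (G : SimpleGraph V) [DecidableRel G.Adj] (ψ : V → V → ℂ) : ℝ :=
  Real.sqrt (∑ a : V, ∑ b ∈ G.neighborFinset a, Complex.normSq (ψ a b))

section Aux

set_option linter.unusedSectionVars false

lemma sum_nbr_swap (G : SimpleGraph V) [DecidableRel G.Adj] {N : Type*} [AddCommMonoid N]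
    (F : V → V → N) :
    ∑ a : V, ∑ b ∈ G.neighborFinset a, F a b = ∑ a : V, ∑ b ∈ G.neighborFinset a, F b a := by
  have key : ∀ (F : V → V → N) (a : V),
      ∑ b ∈ G.neighborFinset a, F a b = ∑ b : V, if G.Adj a b then F a b else 0 := by
    intro F a
    rw [← Finset.sum_filter]
    apply Finset.sum_congr _ (fun _ _ => rfl)
    ext b; simp [SimpleGraph.mem_neighborFinset]
  calc ∑ a : V, ∑ b ∈ G.neighborFinset a, F a b
      = ∑ a : V, ∑ b : V, if G.Adj a b then F a b else 0 :=
        Finset.sum_congr rfl (fun a _ => key F a)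
    _ = ∑ b : V, ∑ a : V, if G.Adj a b then F a b else 0 := Finset.sum_comm
    _ = ∑ a : V, ∑ b : V, if G.Adj a b then F b a else 0 := by
        apply Finset.sum_congr rfl; intro a _
        apply Finset.sum_congr rfl; intro b _
        simp_rw [G.adj_comm]
    _ = ∑ a : V, ∑ b ∈ G.neighborFinset a, F b a :=
        Finset.sum_congr rfl (fun a _ => (key (fun x y => F y x) a).symm)

lemma Uop_apply (G : SimpleGraph V) [DecidableRel G.Adj] (M : Finset V) (ψ : V → V → ℂ)
    (a b : V) :
    Uop G M ψ a b = if b ∈ M then -(2 * avgQ G ψ b) + ψ b a else 2 * avgQ G ψ b - ψ b a := by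
  by_cases hb : b ∈ M <;>
    simp [Uop, Sop, Cop, Qop, avgQ, hb, Finset.sum_neg_distrib] <;> ring

lemma dInner_smul_right (G : SimpleGraph V) [DecidableRel G.Adj] (φ ψ : V → V → ℂ) (c : ℂ) :
    dInner G φ (fun a b => c * ψ a b) = c * dInner G φ ψ := by
  simp only [dInner, Finset.mul_sum]
  exact Finset.sum_congr rfl fun a _ => Finset.sum_congr rfl fun b _ => by ring

lemma stationary_smul (G : SimpleGraph V) [DecidableRel G.Adj] (M : Finset V)
    (φ : V → V → ℂ) (hφ : StationaryU G M φ) (c : ℂ) :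
    StationaryU G M (fun a b => c * φ a b) := by
  intro a b hab
  have h := hφ a b hab
  rw [Uop_apply] at h ⊢
  have havg : avgQ G (fun a b => c * φ a b) b = c * avgQ G φ b := by
    rw [avgQ, avgQ, ← Finset.mul_sum]; ring
  rw [havg]
  by_cases hb : b ∈ M
  · rw [if_pos hb] at h ⊢; linear_combination c * h
  · rw [if_neg hb] at h ⊢; linear_combination c * h

lemma dInner_add_swap (G : SimpleGraph V) [DecidableRel G.Adj] (ψ : V → V → ℂ) :
    dInner G (psi0 G) (fun a b => ψ a b + ψ b a) = 2 * dInner G (psi0 G) ψ := by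
  have hswap := sum_nbr_swap G (fun a b => (starRingEnd ℂ) (psi0 G a b) * ψ a b)
  simp only [dInner, mul_add, Finset.sum_add_distrib]
  have h2 : ∑ a : V, ∑ b ∈ G.neighborFinset a, (starRingEnd ℂ) (psi0 G a b) * ψ b a
      = ∑ a : V, ∑ b ∈ G.neighborFinset a, (starRingEnd ℂ) (psi0 G a b) * ψ a b :=
    hswap.symm
  rw [h2]; ring

end Aux

/-- A unit-norm stationary state with nonzero overlap that maximizes the overlap with the
initial uniform state among unit-norm stationary states is uniform at unmarked vertices,
flip at marked vertices, and symmetric on every edge. -/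
theorem optimal_stationary_state (G : SimpleGraph V) [DecidableRel G.Adj]
    (M : Finset V) (hdeg : ∀ v, 0 < G.degree v) (ψ : V → V → ℂ)
    (hnorm : dNorm G ψ = 1) (hstat : StationaryU G M ψ)
    (hover : dInner G (psi0 G) ψ ≠ 0)
    (hmax : ∀ φ : V → V → ℂ, dNorm G φ = 1 → StationaryU G M φ →
      ‖dInner G (psi0 G) φ‖ ≤ ‖dInner G (psi0 G) ψ‖) :
    (∀ a, a ∉ M → ∀ b ∈ G.neighborFinset a, ∀ c ∈ G.neighborFinset a, ψ a b = ψ a c) ∧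
    (∀ a ∈ M, ∑ b ∈ G.neighborFinset a, ψ a b = 0) ∧
    (∀ a b, G.Adj a b → ψ a b = ψ b a) := by
  classical
  have hdegC : ∀ v, (G.degree v : ℂ) ≠ 0 := fun v => Nat.cast_ne_zero.mpr (hdeg v).ne'
  -- row sums
  have rowsum : ∀ b, ∑ c ∈ G.neighborFinset b, ψ b c = (G.degree b : ℂ) * avgQ G ψ b := by
    intro b
    rw [avgQ, ← mul_assoc, mul_inv_cancel₀ (hdegC b), one_mul]
  -- stationarity at unmarked / marked vertices
  have fact1 : ∀ a b, G.Adj a b → b ∉ M → ψ a b + ψ b a = 2 * avgQ G ψ b := by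
    intro a b hab hb
    have h := hstat a b hab
    rw [Uop_apply, if_neg hb] at h
    linear_combination -h
  have fact2 : ∀ a b, G.Adj a b → b ∈ M → ψ a b - ψ b a = -(2 * avgQ G ψ b) := by
    intro a b hab hb
    have h := hstat a b hab
    rw [Uop_apply, if_pos hb] at h
    linear_combination -h
  -- column sums
  have colsum : ∀ b, ∑ a ∈ G.neighborFinset b, ψ a b
      = (if b ∈ M then -((G.degree b : ℂ) * avgQ G ψ b) else (G.degree b : ℂ) * avgQ G ψ b) := by
    intro b
    have hcard : ((G.neighborFinset b).card : ℂ) = (G.degree b : ℂ) := rfl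
    by_cases hb : b ∈ M
    · rw [if_pos hb]
      have hterm : ∀ a ∈ G.neighborFinset b, ψ a b = ψ b a - 2 * avgQ G ψ b := by
        intro a ha
        have hab : G.Adj a b := ((G.mem_neighborFinset b a).mp ha).symm
        linear_combination fact2 a b hab hb
      calc ∑ a ∈ G.neighborFinset b, ψ a b
          = ∑ a ∈ G.neighborFinset b, (ψ b a - 2 * avgQ G ψ b) := Finset.sum_congr rfl hterm
        _ = (∑ a ∈ G.neighborFinset b, ψ b a)
              - ((G.neighborFinset b).card : ℂ) * (2 * avgQ G ψ b) := by
            rw [Finset.sum_sub_distrib, Finset.sum_const, nsmul_eq_mul]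
        _ = -((G.degree b : ℂ) * avgQ G ψ b) := by
            rw [rowsum, hcard]; ring
    · rw [if_neg hb]
      have hterm : ∀ a ∈ G.neighborFinset b, ψ a b = 2 * avgQ G ψ b - ψ b a := by
        intro a ha
        have hab : G.Adj a b := ((G.mem_neighborFinset b a).mp ha).symm
        linear_combination fact1 a b hab hb
      calc ∑ a ∈ G.neighborFinset b, ψ a b
          = ∑ a ∈ G.neighborFinset b, (2 * avgQ G ψ b - ψ b a) := Finset.sum_congr rfl hterm
        _ = ((G.neighborFinset b).card : ℂ) * (2 * avgQ G ψ b)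
              - ∑ a ∈ G.neighborFinset b, ψ b a := by
            rw [Finset.sum_sub_distrib, Finset.sum_const, nsmul_eq_mul]
        _ = (G.degree b : ℂ) * avgQ G ψ b := by
            rw [rowsum, hcard]; ring
  -- the symmetric part
  set e : V → V → ℂ := fun x y => ψ x y + ψ y x with he
  have avg_e : ∀ b, avgQ G e b = if b ∈ M then 0 else 2 * avgQ G ψ b := by
    intro b
    have hsum : ∑ c ∈ G.neighborFinset b, e b c
        = (∑ c ∈ G.neighborFinset b, ψ b c) + ∑ c ∈ G.neighborFinset b, ψ c b := by
      simp only [he]; exact Finset.sum_add_distrib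
    rw [avgQ, hsum, rowsum, colsum]
    by_cases hb : b ∈ M
    · rw [if_pos hb, if_pos hb]; ring
    · rw [if_neg hb, if_neg hb]
      field_simp [hdegC b]
      ring
  have estat : StationaryU G M e := by
    intro a b hab
    rw [Uop_apply, avg_e]
    by_cases hb : b ∈ M
    · rw [if_pos hb, if_pos hb]
      simp only [he]; ring
    · rw [if_neg hb, if_neg hb]
      simp only [he]
      linear_combination -2 * fact1 a b hab hb
  -- sum of |ψ|^2 over darts is 1
  have hS0 : 0 ≤ ∑ a : V, ∑ b ∈ G.neighborFinset a, Complex.normSq (ψ a b) :=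
    Finset.sum_nonneg fun a _ => Finset.sum_nonneg fun b _ => Complex.normSq_nonneg _
  have hS : ∑ a : V, ∑ b ∈ G.neighborFinset a, Complex.normSq (ψ a b) = 1 := by
    have h := hnorm
    rw [dNorm] at h
    nlinarith [Real.sq_sqrt hS0, h]
  -- main step: ψ is symmetric on darts
  have hsym : ∀ a b, G.Adj a b → ψ a b = ψ b a := by
    by_contra hc
    push_neg at hc
    obtain ⟨a0, b0, hab0, hne0⟩ := hc
    set d : V → V → ℂ := fun x y => ψ x y - ψ y x with hd
    set Nd := ∑ a : V, ∑ b ∈ G.neighborFinset a, Complex.normSq (d a b) with hNd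
    set Ne := ∑ a : V, ∑ b ∈ G.neighborFinset a, Complex.normSq (e a b) with hNe
    have hNe_nonneg : 0 ≤ Ne :=
      Finset.sum_nonneg fun a _ => Finset.sum_nonneg fun b _ => Complex.normSq_nonneg _
    -- Nd > 0
    have hb0 : b0 ∈ G.neighborFinset a0 := (G.mem_neighborFinset a0 b0).mpr hab0
    have hterm : 0 < Complex.normSq (d a0 b0) := by
      apply Complex.normSq_pos.mpr
      simp only [hd]
      exact sub_ne_zero.mpr hne0
    have hin : Complex.normSq (d a0 b0) ≤ ∑ b ∈ G.neighborFinset a0, Complex.normSq (d a0 b) :=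
      Finset.single_le_sum (fun i _ => Complex.normSq_nonneg _) hb0
    have hout : ∑ b ∈ G.neighborFinset a0, Complex.normSq (d a0 b) ≤ Nd := by
      rw [hNd]
      exact Finset.single_le_sum
        (f := fun a => ∑ b ∈ G.neighborFinset a, Complex.normSq (d a b))
        (fun i _ => Finset.sum_nonneg fun b _ => Complex.normSq_nonneg _) (Finset.mem_univ a0)
    have hNd_pos : 0 < Nd := lt_of_lt_of_le hterm (le_trans hin hout)
    -- Ne + Nd = 4
    have par : ∀ u v : ℂ, Complex.normSq (u + v) + Complex.normSq (u - v)
        = 2 * Complex.normSq u + 2 * Complex.normSq v := by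
      intro u v
      simp only [Complex.normSq_apply, Complex.add_re, Complex.add_im, Complex.sub_re,
        Complex.sub_im]
      ring
    have hNeNd : Ne + Nd = 4 := by
      have step1 : Ne + Nd = ∑ a : V, ∑ b ∈ G.neighborFinset a,
          (2 * Complex.normSq (ψ a b) + 2 * Complex.normSq (ψ b a)) := by
        rw [hNe, hNd, ← Finset.sum_add_distrib]
        refine Finset.sum_congr rfl fun a _ => ?_
        rw [← Finset.sum_add_distrib]
        refine Finset.sum_congr rfl fun b _ => ?_
        simp only [he, hd]
        exact par (ψ a b) (ψ b a)
      have step2 : ∑ a : V, ∑ b ∈ G.neighborFinset a,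
          (2 * Complex.normSq (ψ a b) + 2 * Complex.normSq (ψ b a))
          = 2 * (∑ a : V, ∑ b ∈ G.neighborFinset a, Complex.normSq (ψ a b))
            + 2 * (∑ a : V, ∑ b ∈ G.neighborFinset a, Complex.normSq (ψ b a)) := by
        rw [Finset.mul_sum, Finset.mul_sum, ← Finset.sum_add_distrib]
        refine Finset.sum_congr rfl fun a _ => ?_
        rw [Finset.mul_sum, Finset.mul_sum, ← Finset.sum_add_distrib]
      have step3 : ∑ a : V, ∑ b ∈ G.neighborFinset a, Complex.normSq (ψ b a)
          = ∑ a : V, ∑ b ∈ G.neighborFinset a, Complex.normSq (ψ a b) :=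
        (sum_nbr_swap G (fun a b => Complex.normSq (ψ a b))).symm
      rw [step1, step2, step3, hS]
      norm_num
    -- overlap of e
    have hinner_e : dInner G (psi0 G) e = 2 * dInner G (psi0 G) ψ := dInner_add_swap G ψ
    -- Ne > 0
    have hNe_pos : 0 < Ne := by
      rcases lt_or_eq_of_le hNe_nonneg with h | h
      · exact h
      · exfalso
        have hall : ∀ a, ∀ b ∈ G.neighborFinset a, e a b = 0 := by
          intro a b hb
          have h1 := (Finset.sum_eq_zero_iff_of_nonneg
            (fun a _ => Finset.sum_nonneg fun b _ => Complex.normSq_nonneg (e a b))).mp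
            (by rw [← hNe, ← h]) a (Finset.mem_univ a)
          have h2 := (Finset.sum_eq_zero_iff_of_nonneg
            (fun b _ => Complex.normSq_nonneg (e a b))).mp h1 b hb
          exact Complex.normSq_eq_zero.mp h2
        have hz : dInner G (psi0 G) e = 0 := by
          rw [dInner]
          exact Finset.sum_eq_zero fun a _ => Finset.sum_eq_zero fun b hb => by
            rw [hall a b hb, mul_zero]
        rw [hinner_e] at hz
        exact hover ((mul_eq_zero.mp hz).resolve_left two_ne_zero)
    set L := Real.sqrt Ne with hL
    have hLpos : 0 < L := Real.sqrt_pos.mpr hNe_pos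
    have hLL : L * L = Ne := Real.mul_self_sqrt hNe_nonneg
    have hL2 : L < 2 := by
      have h4 : Real.sqrt 4 = 2 := by
        rw [show (4 : ℝ) = 2 ^ 2 by norm_num, Real.sqrt_sq (by norm_num : (0:ℝ) ≤ 2)]
      calc L < Real.sqrt 4 := Real.sqrt_lt_sqrt hNe_nonneg (by linarith)
        _ = 2 := h4
    -- the improved state
    have hnormu : dNorm G (fun a b => ((L⁻¹ : ℝ) : ℂ) * e a b) = 1 := by
      rw [dNorm]
      have hsum : ∑ a : V, ∑ b ∈ G.neighborFinset a,
          Complex.normSq (((L⁻¹ : ℝ) : ℂ) * e a b) = (L⁻¹ * L⁻¹) * Ne := by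
        rw [hNe, Finset.mul_sum]
        refine Finset.sum_congr rfl fun a _ => ?_
        rw [Finset.mul_sum]
        refine Finset.sum_congr rfl fun b _ => ?_
        rw [Complex.normSq_mul, Complex.normSq_ofReal]
      rw [hsum]
      have h1 : L⁻¹ * L⁻¹ * Ne = 1 := by
        rw [← hLL]; field_simp
      rw [h1, Real.sqrt_one]
    have hustat : StationaryU G M (fun a b => ((L⁻¹ : ℝ) : ℂ) * e a b) :=
      stationary_smul G M e estat _
    have hle := hmax _ hnormu hustat
    have habs : ‖dInner G (psi0 G) (fun a b => ((L⁻¹ : ℝ) : ℂ) * e a b)‖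
        = L⁻¹ * (2 * ‖dInner G (psi0 G) ψ‖) := by
      rw [dInner_smul_right, hinner_e, norm_mul, norm_mul, Complex.norm_real,
        Real.norm_eq_abs, abs_of_pos (inv_pos.mpr hLpos)]
      norm_num
    rw [habs] at hle
    have hA : 0 < ‖dInner G (psi0 G) ψ‖ := by
      rcases (norm_nonneg (dInner G (psi0 G) ψ)).lt_or_eq with h | h
      · exact h
      · exact absurd (norm_eq_zero.mp h.symm) hover
    have h2A : 2 * ‖dInner G (psi0 G) ψ‖
        ≤ L * ‖dInner G (psi0 G) ψ‖ := by
      have := mul_le_mul_of_nonneg_left hle hLpos.le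
      rwa [← mul_assoc, mul_inv_cancel₀ hLpos.ne', one_mul] at this
    nlinarith
  -- conclude
  refine ⟨?_, ?_, hsym⟩
  · intro a haM b hb c hc
    have hab : G.Adj a b := (G.mem_neighborFinset a b).mp hb
    have hac : G.Adj a c := (G.mem_neighborFinset a c).mp hc
    have h1 := fact1 b a hab.symm haM
    have h2 := fact1 c a hac.symm haM
    linear_combination h1 / 2 - h2 / 2 + (hsym a b hab) / 2 - (hsym a c hac) / 2
  · intro a haM
    obtain ⟨x, hx⟩ := Finset.card_pos.mp (hdeg a)
    have hax : G.Adj a x := (G.mem_neighborFinset a x).mp hx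
    have h2 := fact2 x a hax.symm haM
    have hs := hsym a x hax
    have havg : avgQ G ψ a = 0 := by linear_combination h2 / 2 + hs / 2
    rw [rowsum a, havg, mul_zero]
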